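/- For every θ > 0, N ≥ 1, ε₀ ∈ (0, 1/(1+θ)) and ε > 0 there exists T > 1 such that for every t ≥ T, every potential ξ : ℤ^d → [1,∞), and every z ∈ ℤ^d satisfying t ξ(z) ≥ |z|, |z| ≤ N r_t and −q(1−ε₀)|z|/r_t ≤ Φ_t(z)/a_t ≤ N, one has | Φ_{(1+θ)t}(z)/a_t − Φ_t(z)/a_t − (qθ/(1+θ)) |z|/r_t | < ε. -/

import Mathlib

open MeasureTheory Filter Real Set ProbabilityTheory

noncomputable section

/-- The `ℓ¹`-norm of a lattice point, as a real number. -/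
def lnorm {d : ℕ} (z : Fin d → ℤ) : ℝ := ∑ i, |(z i : ℝ)|

/-- The number of nearest-neighbour lattice paths of length `‖z‖₁` from the origin to `z`. -/
def numPaths (d : ℕ) (z : Fin d → ℤ) : ℕ :=
  Set.ncard {p : Fin (∑ i, (z i).natAbs + 1) → (Fin d → ℤ) |
    p 0 = 0 ∧ p (Fin.last _) = z ∧
    ∀ i : Fin (∑ i, (z i).natAbs), (∑ j, ((p i.succ j) - (p i.castSucc j)).natAbs) = 1}

/-- `η(z)`: the logarithm of the number of paths of length `‖z‖₁` from `0` to `z`. -/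
def pathEntropy {d : ℕ} (z : Fin d → ℤ) : ℝ := Real.log (numPaths d z)

/-- The functional `Φ_t` associated with a potential `ξ`:
`Φ_t(z) = ξ(z) - (|z|/t) log ξ(z) + η(z)/t` if `t ξ(z) ≥ |z|`, and `0` otherwise. -/
def Phi {d : ℕ} (ξ : (Fin d → ℤ) → ℝ) (t : ℝ) (z : Fin d → ℤ) : ℝ :=
  if lnorm z ≤ t * ξ z then ξ z - lnorm z / t * Real.log (ξ z) + pathEntropy z / t else 0

/-- The spatial scaling function `r_t = (t / log t) ^ (α/(α-d))`. -/
def rScale (α : ℝ) (d : ℕ) (t : ℝ) : ℝ := (t / Real.log t) ^ (α / (α - d))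

/-- The scaling function `a_t = (t / log t) ^ (d/(α-d))`. -/
def aScale (α : ℝ) (d : ℕ) (t : ℝ) : ℝ := (t / Real.log t) ^ ((d : ℝ) / (α - d))


lemma numPaths_le (d : ℕ) (z : Fin d → ℤ) :
    numPaths d z ≤ 3 ^ (d * ∑ i, (z i).natAbs) := by
  classical
  set n := ∑ i, (z i).natAbs with hn
  set S : Set (Fin (n + 1) → (Fin d → ℤ)) := {p |
    p 0 = 0 ∧ p (Fin.last _) = z ∧
    ∀ i : Fin n, (∑ j, ((p i.succ j) - (p i.castSucc j)).natAbs) = 1} with hS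
  have hnum : numPaths d z = S.ncard := rfl
  set f : (Fin (n + 1) → (Fin d → ℤ)) → (Fin n → Fin d → Fin 3) := fun p i j =>
    ⟨min (p i.succ j - p i.castSucc j + 1).toNat 2, by omega⟩ with hf
  have hstepbd : ∀ p ∈ S, ∀ i : Fin n, ∀ j, (p i.succ j - p i.castSucc j).natAbs ≤ 1 := by
    intro p hp i j
    have h1 := hp.2.2 i
    calc (p i.succ j - p i.castSucc j).natAbs
        ≤ ∑ j, ((p i.succ j) - (p i.castSucc j)).natAbs :=
          Finset.single_le_sum (f := fun j => ((p i.succ j) - (p i.castSucc j)).natAbs)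
            (fun _ _ => Nat.zero_le _) (Finset.mem_univ j)
      _ = 1 := h1
  have hinj : Set.InjOn f S := by
    intro p hp q hq hpq
    have hstep : ∀ i : Fin n, ∀ j, p i.succ j - p i.castSucc j = q i.succ j - q i.castSucc j := by
      intro i j
      have h1 := hstepbd p hp i j
      have h2 := hstepbd q hq i j
      have h3 : (f p i j : ℕ) = (f q i j : ℕ) := by rw [hpq]
      simp only [hf] at h3
      omega
    funext k
    induction k using Fin.induction with
    | zero => rw [hp.1, hq.1]
    | succ i ih =>
        funext j
        have h1 := hstep i j
        have h2 : p i.castSucc j = q i.castSucc j := by rw [ih]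
        omega
  have h1 : S.ncard ≤ (Set.univ : Set (Fin n → Fin d → Fin 3)).ncard :=
    Set.ncard_le_ncard_of_injOn f (fun a _ => Set.mem_univ _) hinj Set.finite_univ
  rw [hnum]
  refine h1.trans ?_
  rw [Set.ncard_univ, Nat.card_eq_fintype_card]
  simp [Fintype.card_fun, pow_mul]

lemma lnorm_eq {d : ℕ} (z : Fin d → ℤ) : lnorm z = ((∑ i, (z i).natAbs : ℕ) : ℝ) := by
  rw [lnorm]
  push_cast
  refine Finset.sum_congr rfl fun i _ => ?_
  rw [Nat.cast_natAbs]
  push_cast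
  ring

lemma lnorm_nonneg {d : ℕ} (z : Fin d → ℤ) : 0 ≤ lnorm z :=
  Finset.sum_nonneg fun i _ => abs_nonneg _

lemma pathEntropy_nonneg {d : ℕ} (z : Fin d → ℤ) : 0 ≤ pathEntropy z := by
  rw [pathEntropy]
  rcases Nat.eq_zero_or_pos (numPaths d z) with h | h
  · simp [h]
  · exact Real.log_nonneg (by exact_mod_cast h)

lemma pathEntropy_le {d : ℕ} (z : Fin d → ℤ) :
    pathEntropy z ≤ (d : ℝ) * lnorm z * Real.log 3 := by
  rw [pathEntropy, lnorm_eq]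
  rcases Nat.eq_zero_or_pos (numPaths d z) with h | h
  · simp only [h, Nat.cast_zero, Real.log_zero]
    positivity
  · calc Real.log (numPaths d z) ≤ Real.log (3 ^ (d * ∑ i, (z i).natAbs)) := by
          apply Real.log_le_log (by exact_mod_cast h)
          exact_mod_cast numPaths_le d z
      _ = (d : ℝ) * (∑ i, (z i).natAbs : ℕ) * Real.log 3 := by
          rw [show ((3:ℝ) ^ (d * ∑ i, (z i).natAbs)) = ((3:ℕ) ^ (d * ∑ i, (z i).natAbs) : ℕ)
            by push_cast; ring]
          push_cast
          rw [Real.log_pow]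
          push_cast
          ring

set_option maxHeartbeats 2000000

/-- For `z` in a large box with `Φ_t(z)/a_t` bounded, one has
`Φ_{(1+θ)t}(z)/a_t = Φ_t(z)/a_t + (qθ/(1+θ)) |z|/r_t + error`, where the error tends to `0`
uniformly as `t → ∞`; here `q = d/(α-d)`. -/
theorem Phi_scaled_time_expansion (d : ℕ) (hd : 1 ≤ d) (α : ℝ) (hα : (d:ℝ) < α)
    (θ : ℝ) (hθ : 0 < θ) (N : ℝ) (hN : 1 ≤ N)
    (ε₀ : ℝ) (hε₀ : 0 < ε₀) (hε₀' : ε₀ < 1 / (1 + θ))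
    (ε : ℝ) (hε : 0 < ε) :
    ∃ T : ℝ, 1 < T ∧ ∀ t : ℝ, T ≤ t → ∀ ξ : (Fin d → ℤ) → ℝ, (∀ z, 1 ≤ ξ z) →
      ∀ z : Fin d → ℤ, lnorm z ≤ t * ξ z → lnorm z ≤ N * rScale α d t →
        -(((d:ℝ)/(α - d)) * (1 - ε₀)) * (lnorm z / rScale α d t) ≤ Phi ξ t z / aScale α d t →
        Phi ξ t z / aScale α d t ≤ N →
        |Phi ξ ((1 + θ) * t) z / aScale α d t - Phi ξ t z / aScale α d t
            - ((d:ℝ)/(α - d)) * θ / (1 + θ) * (lnorm z / rScale α d t)| < ε := by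
  have hd0 : (0:ℝ) < d := by exact_mod_cast Nat.lt_of_lt_of_le Nat.zero_lt_one hd
  have hαd : (0:ℝ) < α - d := sub_pos.mpr hα
  have hN0 : (0:ℝ) < N := lt_of_lt_of_le zero_lt_one hN
  have hlog3 : (0:ℝ) ≤ Real.log 3 := Real.log_nonneg (by norm_num)
  set q' : ℝ := (d:ℝ)/(α - d) with hq'def
  have hq'0 : 0 < q' := div_pos hd0 hαd
  clear_value q'
  have h4Nq : (0:ℝ) < 4*N*q' := mul_pos (mul_pos four_pos hN0) hq'0
  set δ : ℝ := min (1/2) (ε/(4*N*q')) with hδdef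
  have hδ0 : 0 < δ := lt_min (by norm_num) (div_pos hε h4Nq)
  have hδhalf : δ ≤ 1/2 := min_le_left _ _
  have hδer : δ ≤ ε/(4*N*q') := min_le_right _ _
  clear_value δ
  have hδne : δ ≠ 0 := ne_of_gt hδ0
  have h1δ : (0:ℝ) < 1 - δ := by linarith
  have h1δne : (1:ℝ) - δ ≠ 0 := ne_of_gt h1δ
  set K : ℝ := 1/δ with hKdef
  have hK1 : 1 ≤ K := by rw [hKdef, le_div_iff₀ hδ0]; linarith
  clear_value K
  have hKN1 : 1 ≤ 2*K*N := by nlinarith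
  have hKN0 : (0:ℝ) < 2*K*N := by nlinarith
  have hlog2KN : 0 ≤ Real.log (2*K*N) := Real.log_nonneg hKN1
  have hδ2 : N*q'*δ/(1-δ) ≤ ε/2 := by
    rw [div_le_iff₀ h1δ]
    have h3 : δ * (4*N*q') ≤ ε := by
      rw [← le_div_iff₀ h4Nq]; exact hδer
    nlinarith
  -- eventual conditions
  have hlogdiv : Tendsto (fun l:ℝ => Real.log l / l) atTop (nhds 0) :=
    Real.isLittleO_log_id_atTop.tendsto_div_nhds_zero
  have hev1 : ∀ᶠ l : ℝ in atTop,
      N*Real.log (2*K*N)/((1-δ)*l) ≤ ε/2 ∧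
      q'/l + (d:ℝ)*Real.log 3/l^2 ≤ ε ∧
      (N*((q'+2)*Real.log l + (d:ℝ)*Real.log 3))/l ≤ ε := by
    have t1 : Tendsto (fun l:ℝ => N*Real.log (2*K*N)/((1-δ)*l)) atTop (nhds 0) :=
      tendsto_const_nhds.div_atTop (Tendsto.const_mul_atTop h1δ tendsto_id)
    have t2a : Tendsto (fun l:ℝ => q'/l) atTop (nhds 0) :=
      tendsto_const_nhds.div_atTop tendsto_id
    have t2b : Tendsto (fun l:ℝ => (d:ℝ)*Real.log 3/l^2) atTop (nhds 0) :=
      tendsto_const_nhds.div_atTop (tendsto_pow_atTop two_ne_zero)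
    have t2 : Tendsto (fun l:ℝ => q'/l + (d:ℝ)*Real.log 3/l^2) atTop (nhds 0) := by
      have := t2a.add t2b
      simpa using this
    have t3a : Tendsto (fun l:ℝ => N*(q'+2)*(Real.log l/l) + (N*((d:ℝ)*Real.log 3))/l)
        atTop (nhds 0) := by
      have := (hlogdiv.const_mul (N*(q'+2))).add
        (tendsto_const_nhds.div_atTop (tendsto_id (α := ℝ) (x := atTop)) :
          Tendsto (fun l:ℝ => (N*((d:ℝ)*Real.log 3))/l) atTop (nhds 0))
      simpa using this
    have t3 : Tendsto (fun l:ℝ => (N*((q'+2)*Real.log l + (d:ℝ)*Real.log 3))/l)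
        atTop (nhds 0) := by
      have heq : (fun l:ℝ => (N*((q'+2)*Real.log l + (d:ℝ)*Real.log 3))/l) =ᶠ[atTop]
          (fun l => N*(q'+2)*(Real.log l/l) + (N*((d:ℝ)*Real.log 3))/l) := by
        filter_upwards [eventually_ne_atTop (0:ℝ)] with l hl
        field_simp
      rw [tendsto_congr' heq]
      exact t3a
    filter_upwards [t1.eventually_le_const (half_pos hε),
      t2.eventually_le_const hε, t3.eventually_le_const hε] with l h1 h2 h3
    exact ⟨h1, h2, h3⟩
  have hevt : ∀ᶠ t : ℝ in atTop, 1 < t ∧ 1 ≤ Real.log t ∧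
      (N*Real.log (2*K*N)/((1-δ)*Real.log t) ≤ ε/2 ∧
      q'/Real.log t + (d:ℝ)*Real.log 3/(Real.log t)^2 ≤ ε ∧
      (N*((q'+2)*Real.log (Real.log t) + (d:ℝ)*Real.log 3))/Real.log t ≤ ε) :=
    (eventually_gt_atTop 1).and ((Real.tendsto_log_atTop.eventually_ge_atTop 1).and
      (Real.tendsto_log_atTop.eventually hev1))
  obtain ⟨T, hT⟩ := eventually_atTop.mp hevt
  refine ⟨max T 2, lt_of_lt_of_le one_lt_two (le_max_right _ _), ?_⟩
  intro t ht ξ hξ z hz1 hz2 hz3 hz4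
  obtain ⟨ht1, hlog1, hD, hE, hF⟩ := hT t (le_trans (le_max_left _ _) ht)
  set L := Real.log t with hLdef
  have ht0 : (0:ℝ) < t := lt_trans zero_lt_one ht1
  have htne : t ≠ 0 := ne_of_gt ht0
  have hLt : L ≤ t := by
    have h1 := Real.log_le_sub_one_of_pos ht0
    rw [← hLdef] at h1
    linarith only [h1]
  clear_value L
  have hL0 : (0:ℝ) < L := by linarith only [hlog1]
  have hLne : L ≠ 0 := ne_of_gt hL0
  have hlogL0 : 0 ≤ Real.log L := Real.log_nonneg hlog1
  set s : ℝ := t / L with hsdef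
  have hs1 : 1 ≤ s := (one_le_div hL0).mpr hLt
  clear_value s
  have hs0 : 0 < s := by linarith only [hs1]
  have hsne : s ≠ 0 := ne_of_gt hs0
  set A : ℝ := s ^ q' with hAdef
  have hA : aScale α d t = A := by rw [aScale, hAdef, hsdef, hLdef, hq'def]
  have hA1 : 1 ≤ A := by rw [hAdef]; exact Real.one_le_rpow hs1 (le_of_lt hq'0)
  clear_value A
  have hA0 : 0 < A := by linarith only [hA1]
  have hAne : A ≠ 0 := ne_of_gt hA0
  have hR : rScale α d t = A * s := by
    have he : α/(α - (d:ℝ)) = q' + 1 := by rw [hq'def]; field_simp; ring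
    rw [rScale, he, ← hLdef, ← hsdef, Real.rpow_add hs0, Real.rpow_one, ← hAdef]
  set n : ℝ := lnorm z with hndef
  have hn0 : 0 ≤ n := lnorm_nonneg z
  set x : ℝ := ξ z with hxdef
  have hx1 : 1 ≤ x := hξ z
  set η : ℝ := pathEntropy z with hηdef
  have hη0 : 0 ≤ η := pathEntropy_nonneg z
  have hηle : η ≤ (d:ℝ) * n * Real.log 3 := pathEntropy_le z
  clear_value n x η
  have hx0 : 0 < x := by linarith only [hx1]
  have hxne : x ≠ 0 := ne_of_gt hx0
  have hlx0 : 0 ≤ Real.log x := Real.log_nonneg hx1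
  set c : ℝ := n / t with hcdef
  have hc0 : 0 ≤ c := div_nonneg hn0 (le_of_lt ht0)
  clear_value c
  have hcx : c ≤ x := by rw [hcdef, div_le_iff₀ ht0, mul_comm]; exact hz1
  have hz2' : n ≤ N * (A * s) := by rwa [hR] at hz2
  have hcA : c ≤ N * A / L := by
    have h1 : N * A / L = N * (A * s) / t := by rw [hsdef]; field_simp
    rw [hcdef, h1]
    exact (div_le_div_iff_of_pos_right ht0).mpr hz2'
  have hPhit : Phi ξ t z = x - c * Real.log x + η / t := by
    simp only [Phi]
    rw [← hxdef, ← hndef, ← hηdef, if_pos hz1, hcdef]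
  have h2t : n ≤ ((1+θ)*t) * x := by
    have h1 : 0 ≤ θ*(t*x) :=
      mul_nonneg (le_of_lt hθ) (mul_nonneg (le_of_lt ht0) (le_of_lt hx0))
    calc n ≤ t * x := hz1
      _ ≤ ((1+θ)*t) * x := by linarith only [h1]
  have hPhi2 : Phi ξ ((1+θ)*t) z = x - n/((1+θ)*t) * Real.log x + η/((1+θ)*t) := by
    simp only [Phi]
    rw [← hxdef, ← hndef, ← hηdef, if_pos h2t]
  have hΦle : x - c * Real.log x + η/t ≤ N * A := by
    rw [hA] at hz4
    have h1 := (div_le_iff₀ hA0).mp hz4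
    rw [hPhit] at h1
    linarith only [h1]
  have hlogA : Real.log A = q' * (L - Real.log L) := by
    rw [hAdef, Real.log_rpow hs0, hsdef, Real.log_div htne hLne, ← hLdef]
  have hlogAle : Real.log A ≤ q' * L := by
    rw [hlogA]
    have h1 : 0 ≤ q' * Real.log L := mul_nonneg (le_of_lt hq'0) hlogL0
    linarith only [h1]
  have hηt0 : 0 ≤ η/t := div_nonneg hη0 (le_of_lt ht0)
  have hxup : (1-δ) * Real.log x ≤ Real.log (2*K*N) + q' * L := by
    by_cases hcase : x ≤ 2*N*A
    · have h1 : Real.log x ≤ Real.log (2*N*A) := Real.log_le_log hx0 hcase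
      have h2 : Real.log (2*N*A) = Real.log (2*N) + Real.log A :=
        Real.log_mul (by linarith only [hN0]) hAne
      have h25 : 1*N ≤ K*N := mul_le_mul_of_nonneg_right hK1 (le_of_lt hN0)
      have h3 : Real.log (2*N) ≤ Real.log (2*K*N) :=
        Real.log_le_log (by linarith only [hN0]) (by linarith only [h25])
      have h35 : 0 ≤ δ * Real.log x := mul_nonneg (le_of_lt hδ0) hlx0
      linarith only [h1, h2, h3, h35, hlogAle]
    · push_neg at hcase
      have h1 : x - c * Real.log x ≤ N * A := by linarith only [hΦle, hηt0]
      have h2 : x/2 ≤ c * Real.log x := by linarith only [h1, hcase]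
      have hxδ0 : 0 < x ^ δ := Real.rpow_pos_of_pos hx0 δ
      have hlxK : Real.log x ≤ K * x ^ δ := by
        have h3 : Real.log (x ^ δ) ≤ x ^ δ - 1 :=
          Real.log_le_sub_one_of_pos hxδ0
        rw [Real.log_rpow hx0] at h3
        have h4 : δ * Real.log x ≤ x ^ δ := by linarith only [h3, hxδ0]
        calc Real.log x = (1/δ) * (δ * Real.log x) := by field_simp
          _ ≤ (1/δ) * x ^ δ :=
              mul_le_mul_of_nonneg_left h4 (one_div_nonneg.mpr (le_of_lt hδ0))
          _ = K * x ^ δ := by rw [hKdef]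
      have hNA0 : (0:ℝ) ≤ N * A := mul_nonneg (le_of_lt hN0) (le_of_lt hA0)
      have hcNA : c ≤ N * A := hcA.trans (div_le_self hNA0 hlog1)
      have h5 : x/2 ≤ (N*A) * (K * x^δ) :=
        h2.trans (mul_le_mul hcNA hlxK hlx0 hNA0)
      have h6 : x ^ (1-δ) ≤ 2*K*N*A := by
        have h7 : x ^ (1-δ) = x / x ^ δ := by
          rw [Real.rpow_sub hx0, Real.rpow_one]
        rw [h7, div_le_iff₀ hxδ0]
        linarith only [h5]
      have h8 : (1-δ) * Real.log x = Real.log (x ^ (1-δ)) := (Real.log_rpow hx0 _).symm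
      rw [h8]
      calc Real.log (x ^ (1-δ)) ≤ Real.log (2*K*N*A) :=
            Real.log_le_log (Real.rpow_pos_of_pos hx0 _) h6
        _ = Real.log (2*K*N) + Real.log A := Real.log_mul (ne_of_gt hKN0) hAne
        _ ≤ Real.log (2*K*N) + q' * L := by linarith only [hlogAle]
  set E : ℝ := c * Real.log x - η/t - q' * c * L with hEdef
  clear_value E
  have hηt : η/t ≤ c * ((d:ℝ) * Real.log 3) := by
    have h1 : c * ((d:ℝ)*Real.log 3) * t = (d:ℝ) * n * Real.log 3 := by
      rw [hcdef]; field_simp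
    rw [div_le_iff₀ ht0, h1]; exact hηle
  have hupper : E ≤ ε * A := by
    set B : ℝ := (Real.log (2*K*N) + q'*δ*L)/(1-δ) with hBdef
    clear_value B
    have hB0 : 0 ≤ B := by
      rw [hBdef]
      apply div_nonneg _ (le_of_lt h1δ)
      have h1 : 0 < q'*δ*L := mul_pos (mul_pos hq'0 hδ0) hL0
      linarith only [hlog2KN, h1]
    have hlxB : Real.log x - q' * L ≤ B := by
      rw [hBdef, le_div_iff₀ h1δ]
      linarith only [hxup]
    have h1 : E ≤ c * B := by
      calc E ≤ c * (Real.log x - q' * L) := by rw [hEdef]; linarith only [hηt0]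
        _ ≤ c * B := mul_le_mul_of_nonneg_left hlxB hc0
    have h2 : c * B ≤ (N*A/L) * B :=
      mul_le_mul_of_nonneg_right hcA hB0
    have h3 : (N*A/L)*B ≤ ε * A := by
      have h4 : (N*A/L)*B = A * (N*Real.log (2*K*N)/((1-δ)*L) + N*q'*δ/(1-δ)) := by
        rw [hBdef]; field_simp
      rw [h4]
      have h5 : N*Real.log (2*K*N)/((1-δ)*L) + N*q'*δ/(1-δ) ≤ ε := by
        linarith only [hD, hδ2]
      have h6 := mul_le_mul_of_nonneg_left h5 (le_of_lt hA0)
      linarith only [h6]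
    linarith only [h1, h2, h3]
  have hlower : -(ε * A) ≤ E := by
    by_cases hcase : c ≤ A / L^2
    · have h1 : -E ≤ c * (q'*L + (d:ℝ)*Real.log 3) := by
        have h0 : 0 ≤ c * Real.log x := mul_nonneg hc0 hlx0
        rw [hEdef]; linarith only [h0, hηt]
      have h2 : c * (q'*L + (d:ℝ)*Real.log 3) ≤ (A/L^2) * (q'*L + (d:ℝ)*Real.log 3) := by
        apply mul_le_mul_of_nonneg_right hcase
        have h21 : 0 < q'*L := mul_pos hq'0 hL0
        have h22 : 0 ≤ (d:ℝ)*Real.log 3 := mul_nonneg (le_of_lt hd0) hlog3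
        linarith only [h21, h22]
      have h3 : (A/L^2) * (q'*L + (d:ℝ)*Real.log 3) = A * (q'/L + (d:ℝ)*Real.log 3/L^2) := by
        field_simp
      have h4 : A * (q'/L + (d:ℝ)*Real.log 3/L^2) ≤ A * ε :=
        mul_le_mul_of_nonneg_left hE (le_of_lt hA0)
      linarith only [h1, h2, h3, h4]
    · push_neg at hcase
      have hL2 : (0:ℝ) < L^2 := pow_pos hL0 2
      have hlogc : Real.log (A/L^2) ≤ Real.log x :=
        Real.log_le_log (div_pos hA0 hL2) (le_trans (le_of_lt hcase) hcx)
      have h6 : Real.log (A/L^2) = Real.log A - 2 * Real.log L := by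
        rw [Real.log_div hAne (ne_of_gt hL2), Real.log_pow]
        norm_num
      have h7 : q'*L - Real.log x ≤ (q'+2) * Real.log L := by
        rw [h6, hlogA] at hlogc
        linarith only [hlogc]
      have h9 : c * (q'*L - Real.log x) ≤ c * ((q'+2)*Real.log L) :=
        mul_le_mul_of_nonneg_left h7 hc0
      have h8 : -E ≤ c * ((q'+2)*Real.log L + (d:ℝ)*Real.log 3) := by
        have h10 : -E = c*(q'*L - Real.log x) + η/t := by rw [hEdef]; ring
        linarith only [h9, hηt, h10]
      have h11 : c * ((q'+2)*Real.log L + (d:ℝ)*Real.log 3)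
          ≤ (N*A/L) * ((q'+2)*Real.log L + (d:ℝ)*Real.log 3) := by
        apply mul_le_mul_of_nonneg_right hcA
        have h111 : 0 ≤ q' * Real.log L := mul_nonneg (le_of_lt hq'0) hlogL0
        have h112 : 0 ≤ (d:ℝ)*Real.log 3 := mul_nonneg (le_of_lt hd0) hlog3
        linarith only [h111, h112, hlogL0]
      have h12 : (N*A/L) * ((q'+2)*Real.log L + (d:ℝ)*Real.log 3)
          = A * ((N*((q'+2)*Real.log L + (d:ℝ)*Real.log 3))/L) := by
        field_simp
      have h13 : A * ((N*((q'+2)*Real.log L + (d:ℝ)*Real.log 3))/L) ≤ A * ε :=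
        mul_le_mul_of_nonneg_left hF (le_of_lt hA0)
      linarith only [h8, h11, h12, h13]
  have habs : |E| ≤ ε * A := abs_le.mpr ⟨hlower, hupper⟩
  have h1θ : (0:ℝ) < 1 + θ := by linarith only [hθ]
  have h1θne : (1:ℝ) + θ ≠ 0 := ne_of_gt h1θ
  have hkey : Phi ξ ((1+θ)*t) z / aScale α d t - Phi ξ t z / aScale α d t
      - q' * θ / (1+θ) * (n / rScale α d t) = (θ/(1+θ)) * E / A := by
    rw [hA, hR, hPhit, hPhi2, hEdef, hcdef, hsdef]
    field_simp
    ring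
  rw [hkey, abs_div, abs_mul,
    abs_of_nonneg (div_nonneg (le_of_lt hθ) (le_of_lt h1θ)), abs_of_pos hA0]
  have hfrac : θ/(1+θ) < 1 := by rw [div_lt_one h1θ]; linarith only [hθ]
  have hfrac0 : 0 ≤ θ/(1+θ) := div_nonneg (le_of_lt hθ) (le_of_lt h1θ)
  have h2 : (θ/(1+θ)) * |E| / A ≤ (θ/(1+θ)) * (ε * A) / A :=
    (div_le_div_iff_of_pos_right hA0).mpr (mul_le_mul_of_nonneg_left habs hfrac0)
  have h3 : (θ/(1+θ)) * (ε*A)/A = (θ/(1+θ)) * ε := by field_simp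
  rw [h3] at h2
  have h4 : (θ/(1+θ)) * ε < 1 * ε := mul_lt_mul_of_pos_right hfrac hε
  linarith only [h2, h4]
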